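/- Let k ≥ 2 be an integer. Every directed graph on n vertices with minimum out-degree at least n·log(2k)/(k-1) contains at least n^ℓ/(2k^{ℓ+1}) directed cycles of length ℓ, for some fixed ℓ with 2 ≤ ℓ ≤ k. -/

import Mathlib

open scoped Classical

/-- The cyclic successor on `Fin ℓ`. -/
def cyc {ℓ : ℕ} (i : Fin ℓ) : Fin ℓ := ⟨(i.val + 1) % ℓ, Nat.mod_lt _ i.pos⟩

lemma cyc_add {ℓ : ℕ} (i s : Fin ℓ) : cyc (i + s) = cyc i + s := by
  apply Fin.ext
  simp only [cyc, Fin.add_def]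
  rw [Nat.mod_add_mod, Nat.mod_add_mod]
  congr 1
  omega

/-- canonical labelled cycles: minimum vertex at position 0 -/
def IsCanon {ℓ n : ℕ} (D : Fin n → Fin n → Prop) (g : Fin ℓ → Fin n) : Prop :=
  Function.Injective g ∧ (∀ i, D (g i) (g (cyc i))) ∧ ∀ i j, i.val = 0 → g i ≤ g j

lemma exists_periodic_orbit {α : Type*} [Fintype α] [Nonempty α] (G : α → α) :
    ∃ (a : α) (ℓ : ℕ), 0 < ℓ ∧ ℓ ≤ Fintype.card α ∧ G^[ℓ] a = a ∧
      ∀ r s : ℕ, r < s → s < ℓ → G^[r] a ≠ G^[s] a := by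
  classical
  obtain ⟨a₀⟩ := ‹Nonempty α›
  have hcard : Fintype.card α < Fintype.card (Fin (Fintype.card α + 1)) := by simp
  obtain ⟨i, j, hij, hfij⟩ :=
    Fintype.exists_ne_map_eq_of_card_lt (fun m : Fin (Fintype.card α + 1) => G^[m.val] a₀) hcard
  have hex : ∃ m' : ℕ, m' ≤ Fintype.card α ∧ ∃ m : ℕ, m < m' ∧ G^[m] a₀ = G^[m'] a₀ := by
    rcases lt_or_gt_of_ne (fun h : i = j => hij h) with h | h
    · exact ⟨j.val, by omega, i.val, h, hfij⟩
    · exact ⟨i.val, by omega, j.val, h, hfij.symm⟩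
  let P : ℕ → Prop := fun m' => ∃ m : ℕ, m < m' ∧ G^[m] a₀ = G^[m'] a₀
  have hP : ∃ m', P m' := ⟨hex.choose, hex.choose_spec.2⟩
  obtain ⟨m, hmm', heq⟩ : P (Nat.find hP) := Nat.find_spec hP
  have hm'le : Nat.find hP ≤ Fintype.card α :=
    le_trans (Nat.find_min' hP hex.choose_spec.2) hex.choose_spec.1
  refine ⟨G^[m] a₀, Nat.find hP - m, by omega, by omega, ?_, ?_⟩
  · rw [← Function.iterate_add_apply, Nat.sub_add_cancel (le_of_lt hmm')]
    exact heq.symm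
  · intro r s hrs hs hne
    rw [← Function.iterate_add_apply, ← Function.iterate_add_apply] at hne
    exact Nat.find_min hP (show s + m < Nat.find hP by omega) ⟨r + m, by omega, hne⟩

/-- Every "good" tuple contains a directed cycle among its entries. -/
lemma good_has_cycle {k n : ℕ} (hk : 2 ≤ k) {D : Fin n → Fin n → Prop}
    (hirr : ∀ v, ¬ D v v) (t : Fin k → Fin n)
    (ht : ∀ j, ∃ i, D (t j) (t i)) :
    ∃ ℓ, 2 ≤ ℓ ∧ ℓ ≤ k ∧ ∃ g : Fin ℓ → Fin n,
      Function.Injective g ∧ (∀ i, D (g i) (g (cyc i))) ∧ ∀ i, g i ∈ Set.range t := by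
  classical
  have hk0 : 0 < k := by omega
  haveI : Fintype {v : Fin n // v ∈ Set.range t} := Fintype.ofFinite _
  haveI : Nonempty {v : Fin n // v ∈ Set.range t} := ⟨⟨t ⟨0, hk0⟩, ⟨⟨0, hk0⟩, rfl⟩⟩⟩
  have hGex : ∀ a : {v : Fin n // v ∈ Set.range t},
      ∃ v : {v : Fin n // v ∈ Set.range t}, D a.1 v.1 := by
    rintro ⟨v, j, rfl⟩
    obtain ⟨i, hi⟩ := ht j
    exact ⟨⟨t i, ⟨i, rfl⟩⟩, hi⟩
  choose G hG using hGex
  have hcardS : Fintype.card {v : Fin n // v ∈ Set.range t} ≤ k := by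
    have hsurj : Function.Surjective
        (fun j : Fin k => (⟨t j, ⟨j, rfl⟩⟩ : {v : Fin n // v ∈ Set.range t})) := by
      rintro ⟨v, j, rfl⟩; exact ⟨j, rfl⟩
    calc Fintype.card {v : Fin n // v ∈ Set.range t} ≤ Fintype.card (Fin k) :=
          Fintype.card_le_of_surjective _ hsurj
      _ = k := Fintype.card_fin k
  obtain ⟨a, ℓ, hℓ0, hℓcard, hper, hdist⟩ := exists_periodic_orbit G
  have hℓ2 : 2 ≤ ℓ := by
    by_contra hcon
    have hℓ1 : ℓ = 1 := by omega
    rw [hℓ1] at hper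
    simp only [Function.iterate_one] at hper
    have hd := hG a
    rw [hper] at hd
    exact hirr a.1 hd
  refine ⟨ℓ, hℓ2, le_trans hℓcard hcardS, fun r => (G^[r.val] a).1, ?_, ?_,
    fun r => (G^[r.val] a).2⟩
  · intro r s hrs
    have hrs' : (G^[r.val] a) = (G^[s.val] a) := Subtype.ext hrs
    by_contra hne
    rcases Nat.lt_or_ge r.val s.val with h | h
    · exact hdist r.val s.val h s.isLt hrs'
    · have h' : r.val ≠ s.val := fun h => hne (Fin.ext h)
      exact hdist s.val r.val (by omega) r.isLt hrs'.symm
  · intro i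
    show D (G^[i.val] a).1 (G^[(cyc i).val] a).1
    rcases Nat.lt_or_ge (i.val + 1) ℓ with h | h
    · have hcyc : (cyc i).val = i.val + 1 := by simp [cyc, Nat.mod_eq_of_lt h]
      rw [hcyc, Function.iterate_succ_apply']
      exact hG _
    · have hlast : i.val + 1 = ℓ := by omega
      have hcyc : (cyc i).val = 0 := by simp [cyc, hlast]
      have key : G (G^[i.val] a) = a := by
        have h1 : G (G^[i.val] a) = G^[i.val + 1] a :=
          (Function.iterate_succ_apply' G i.val a).symm
        rw [h1, hlast]
        exact hper
      rw [hcyc]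
      simp only [Function.iterate_zero_apply]
      have hd := hG (G^[i.val] a)
      rw [key] at hd
      exact hd

section Rot
variable {ℓ n : ℕ} {D : Fin n → Fin n → Prop}

lemma rot_edges {g : Fin ℓ → Fin n} [NeZero ℓ] (hg : ∀ i, D (g i) (g (cyc i))) (s : Fin ℓ) :
    ∀ i, D (g (i + s)) (g (cyc i + s)) := fun i => by
  rw [← cyc_add]; exact hg (i + s)

/-- ℓ times the number of canonical cycles is at most the number of labelled cycles. -/
lemma canon_count [NeZero ℓ] :
    ℓ * Fintype.card {g : Fin ℓ → Fin n // IsCanon D g} ≤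
      Fintype.card {f : Fin ℓ → Fin n // Function.Injective f ∧ ∀ i, D (f i) (f (cyc i))} := by
  have key : Function.Injective
      (fun x : (Fin ℓ × {g : Fin ℓ → Fin n // IsCanon D g}) =>
        (⟨fun i => x.2.1 (i + x.1),
          x.2.2.1.comp (add_left_injective x.1),
          fun i => rot_edges x.2.2.2.1 x.1 i⟩ :
          {f : Fin ℓ → Fin n // Function.Injective f ∧ ∀ i, D (f i) (f (cyc i))})) := by
    rintro ⟨s, g, hg⟩ ⟨s', g', hg'⟩ h
    simp only [Subtype.mk.injEq] at h
    have hfun : ∀ i, g (i + s) = g' (i + s') := fun i => congrFun h i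
    have hv0 : ((0 : Fin ℓ)).val = 0 := by simp
    have h1 : g 0 = g' (-s + s') := by simpa using hfun (-s)
    have h2 : g' 0 = g (-s' + s) := (by simpa using hfun (-s') : g (-s' + s) = g' 0).symm
    have hle1 : g' 0 ≤ g 0 := h1 ▸ hg'.2.2 0 _ hv0
    have hle2 : g 0 ≤ g' 0 := h2 ▸ hg.2.2 0 _ hv0
    have h00 : g 0 = g' 0 := le_antisymm hle2 hle1
    have hss : s = s' := by
      have he : g' (-s + s') = g' 0 := by rw [← h1, h00]
      have := hg'.1 he
      rwa [neg_add_eq_zero] at this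
    have hgg : g = g' := funext fun j => by
      have := hfun (j - s)
      rwa [sub_add_cancel, ← hss, sub_add_cancel] at this
    simp only [Prod.mk.injEq, Subtype.mk.injEq]
    exact ⟨hss, hgg⟩
  calc ℓ * Fintype.card {g : Fin ℓ → Fin n // IsCanon D g}
      = Fintype.card (Fin ℓ × {g : Fin ℓ → Fin n // IsCanon D g}) := by
        simp [Fintype.card_prod]
    _ ≤ _ := Fintype.card_le_of_injective _ key

end Rot

/-- canonicalize a cycle contained in a tuple -/
lemma exists_canon {ℓ k n : ℕ} (hℓ : 2 ≤ ℓ) {D : Fin n → Fin n → Prop} (t : Fin k → Fin n)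
    {g : Fin ℓ → Fin n} (hinj : Function.Injective g) (hedge : ∀ i, D (g i) (g (cyc i)))
    (hrange : ∀ i, g i ∈ Set.range t) :
    ∃ (g' : Fin ℓ → Fin n) (p : Fin ℓ → Fin k),
      IsCanon D g' ∧ Function.Injective p ∧ ∀ r, t (p r) = g' r := by
  haveI : NeZero ℓ := ⟨by omega⟩
  obtain ⟨s, -, hs⟩ := Finset.exists_min_image Finset.univ g ⟨0, Finset.mem_univ 0⟩
  have hinj' : Function.Injective (fun i => g (i + s)) := hinj.comp (add_left_injective s)
  have hex : ∀ r : Fin ℓ, ∃ jj, t jj = g (r + s) := fun r => hrange (r + s)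
  choose p hp using hex
  refine ⟨fun i => g (i + s), p, ⟨hinj', fun i => rot_edges hedge s i, ?_⟩, ?_, hp⟩
  · intro i j hi
    have hi0 : i = 0 := Fin.ext (by simpa using hi)
    subst hi0
    simp only [zero_add]
    exact hs (j + s) (Finset.mem_univ _)
  · intro a b hab
    apply hinj'
    show g (a + s) = g (b + s)
    rw [← hp a, ← hp b, hab]

noncomputable def evalSig {ℓ k n : ℕ} (x : Σ p : Fin ℓ ↪ Fin k, ((↥(Set.range p)ᶜ) → Fin n))
    (i : Fin k) : Option (Fin n) :=
  if h : i ∈ (Set.range x.1)ᶜ then some (x.2 ⟨i, h⟩) else none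

lemma Q_count {k n ℓ : ℕ} [NeZero ℓ] {D : Fin n → Fin n → Prop} :
    Fintype.card {t : Fin k → Fin n //
        ∃ (g : Fin ℓ → Fin n) (p : Fin ℓ → Fin k),
          IsCanon D g ∧ Function.Injective p ∧ ∀ r, t (p r) = g r} ≤
      Fintype.card {g : Fin ℓ → Fin n // IsCanon D g} * (Nat.descFactorial k ℓ * n ^ (k - ℓ)) := by
  set Q : (Fin k → Fin n) → Prop := fun t =>
    ∃ (g : Fin ℓ → Fin n) (p : Fin ℓ → Fin k),
      IsCanon D g ∧ Function.Injective p ∧ ∀ r, t (p r) = g r with hQ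
  have hchoice : ∀ t : {t : Fin k → Fin n // Q t},
      ∃ gp : {g : Fin ℓ → Fin n // IsCanon D g} × (Fin ℓ ↪ Fin k),
        ∀ r, t.1 (gp.2 r) = gp.1.1 r := by
    rintro ⟨t, g, p, hg, hp, hpt⟩
    exact ⟨(⟨g, hg⟩, ⟨p, hp⟩), hpt⟩
  choose Φ hΦ using hchoice
  have key : Function.Injective (fun t : {t : Fin k → Fin n // Q t} =>
      ((Φ t).1, (⟨(Φ t).2, fun i => t.1 i.1⟩ :
        Σ p : Fin ℓ ↪ Fin k, ((↥(Set.range p)ᶜ) → Fin n)))) := by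
    intro t t' h
    rw [Prod.mk.injEq] at h
    obtain ⟨hg, hσ⟩ := h
    have hp : (Φ t).2 = (Φ t').2 := congrArg Sigma.fst hσ
    apply Subtype.ext
    funext i
    by_cases hi : i ∈ Set.range ((Φ t).2)
    · obtain ⟨r, hr⟩ := hi
      have e1 := hΦ t r
      have e2 := hΦ t' r
      rw [← hr, e1, hg, ← e2, hp]
    · have hi' : i ∉ Set.range ((Φ t').2) := fun hh => hi (hp ▸ hh)
      have heval := congrArg (fun x => evalSig x i) hσ
      simp only [evalSig, Set.mem_compl_iff] at heval
      rw [dif_pos hi, dif_pos hi'] at heval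
      exact Option.some.inj heval
  calc Fintype.card {t : Fin k → Fin n // Q t}
      ≤ Fintype.card ({g : Fin ℓ → Fin n // IsCanon D g} ×
          (Σ p : Fin ℓ ↪ Fin k, ((↥(Set.range p)ᶜ) → Fin n))) :=
        Fintype.card_le_of_injective _ key
    _ = Fintype.card {g : Fin ℓ → Fin n // IsCanon D g} *
          (Nat.descFactorial k ℓ * n ^ (k - ℓ)) := by
        rw [Fintype.card_prod]
        congr 1
        rw [Fintype.card_sigma]
        have h : ∀ p : Fin ℓ ↪ Fin k,
            Fintype.card ((↥(Set.range p)ᶜ) → Fin n) = n ^ (k - ℓ) := by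
          intro p
          rw [Fintype.card_fun, Fintype.card_fin]
          congr 1
          rw [Fintype.card_compl_set]
          simp [Set.card_range_of_injective p.injective]
        rw [Finset.sum_congr rfl (fun p _ => h p), Finset.sum_const, smul_eq_mul]
        simp [Fintype.card_embedding_eq]

/-- counting tuples whose j-th entry has no out-neighbour among the entries -/
lemma bad_count {k n : ℕ} {D : Fin n → Fin n → Prop} (hirr : ∀ v, ¬ D v v) (j : Fin k) :
    Fintype.card {t : Fin k → Fin n // ∀ i, ¬ D (t j) (t i)} ≤
      ∑ v : Fin n, (n - Fintype.card {u : Fin n // D v u}) ^ (k - 1) := by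
  have key : Function.Injective (fun t : {t : Fin k → Fin n // ∀ i, ¬ D (t j) (t i)} =>
      (⟨t.1 j, fun i => ⟨t.1 i.1, t.2 i.1⟩⟩ :
        Σ v : Fin n, ({i : Fin k // i ≠ j} → {u : Fin n // ¬ D v u}))) := by
    intro t t' h
    have hv : t.1 j = t'.1 j := congrArg Sigma.fst h
    apply Subtype.ext
    funext i
    by_cases hi : i = j
    · rw [hi]; exact hv
    · have heval := congrArg
        (fun x : (Σ v : Fin n, ({i : Fin k // i ≠ j} → {u : Fin n // ¬ D v u})) =>
          (x.2 ⟨i, hi⟩).1) h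
      exact heval
  calc Fintype.card {t : Fin k → Fin n // ∀ i, ¬ D (t j) (t i)}
      ≤ Fintype.card (Σ v : Fin n, ({i : Fin k // i ≠ j} → {u : Fin n // ¬ D v u})) :=
        Fintype.card_le_of_injective _ key
    _ = ∑ v : Fin n, (n - Fintype.card {u : Fin n // D v u}) ^ (k - 1) := by
        rw [Fintype.card_sigma]
        apply Finset.sum_congr rfl
        intro v _
        rw [Fintype.card_fun]
        congr 1
        · rw [Fintype.card_subtype_compl, Fintype.card_fin]
        · rw [Fintype.card_subtype_compl, Fintype.card_subtype_eq, Fintype.card_fin]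

/-- the analytic estimate -/
lemma deg_bound {n k d : ℕ} (hk : 2 ≤ k) (hn : 0 < n)
    (hd : (n : ℝ) * Real.log (2 * k) / ((k : ℝ) - 1) ≤ d) (hdn : d ≤ n) :
    ((n - d : ℕ) : ℝ) ^ (k - 1) ≤ (n : ℝ) ^ (k - 1) / (2 * k) := by
  have hk2 : (2 : ℝ) ≤ (k : ℝ) := by exact_mod_cast hk
  have hk0 : (0 : ℝ) < k := by linarith
  have h2k : (0 : ℝ) < 2 * k := by linarith
  have hn0 : (0 : ℝ) < n := by exact_mod_cast hn
  have hdn' : (d : ℝ) ≤ n := by exact_mod_cast hdn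
  have hcast : ((n - d : ℕ) : ℝ) = (n : ℝ) - d := by
    rw [Nat.cast_sub hdn]
  have hnd0 : (0 : ℝ) ≤ (n : ℝ) - d := by linarith
  have hk1 : (0 : ℝ) < (k : ℝ) - 1 := by linarith
  have hlog : Real.log (2 * k) ≤ (d : ℝ) * ((k : ℝ) - 1) / n := by
    rw [div_le_iff₀ hk1] at hd
    rw [le_div_iff₀ hn0]
    nlinarith [hd]
  have h1 : (1 : ℝ) - (d : ℝ) / n ≤ Real.exp (-((d : ℝ) / n)) := by
    have := Real.add_one_le_exp (-((d : ℝ) / n))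
    linarith
  have step1 : (n : ℝ) - d ≤ n * Real.exp (-((d : ℝ) / n)) := by
    have heq : (n : ℝ) - d = n * (1 - (d : ℝ) / n) := by field_simp
    rw [heq]
    exact mul_le_mul_of_nonneg_left h1 (le_of_lt hn0)
  have step2 : ((n : ℝ) - d) ^ (k - 1) ≤ (n * Real.exp (-((d : ℝ) / n))) ^ (k - 1) :=
    pow_le_pow_left₀ hnd0 step1 _
  have hcastk : (((k : ℕ) - 1 : ℕ) : ℝ) = (k : ℝ) - 1 := by
    rw [Nat.cast_sub (by omega : 1 ≤ k)]
    norm_num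
  have step3 : (n * Real.exp (-((d : ℝ) / n))) ^ (k - 1) =
      (n : ℝ) ^ (k - 1) * Real.exp (((k - 1 : ℕ) : ℝ) * (-((d : ℝ) / n))) := by
    rw [mul_pow, Real.exp_nat_mul]
  have step4 : Real.exp (((k - 1 : ℕ) : ℝ) * (-((d : ℝ) / n))) ≤ Real.exp (-Real.log (2 * k)) := by
    apply Real.exp_le_exp.mpr
    rw [hcastk]
    have : ((k : ℝ) - 1) * (-((d : ℝ) / n)) = -((d : ℝ) * ((k : ℝ) - 1) / n) := by ring
    rw [this]
    linarith
  have step5 : Real.exp (-Real.log (2 * k)) = 1 / (2 * (k : ℝ)) := by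
    rw [Real.exp_neg, Real.exp_log h2k]
    rw [one_div]
  calc ((n - d : ℕ) : ℝ) ^ (k - 1) = ((n : ℝ) - d) ^ (k - 1) := by rw [hcast]
    _ ≤ (n * Real.exp (-((d : ℝ) / n))) ^ (k - 1) := step2
    _ = (n : ℝ) ^ (k - 1) * Real.exp (((k - 1 : ℕ) : ℝ) * (-((d : ℝ) / n))) := step3
    _ ≤ (n : ℝ) ^ (k - 1) * (1 / (2 * (k : ℝ))) := by
        rw [← step5]
        exact mul_le_mul_of_nonneg_left step4 (by positivity)
    _ = (n : ℝ) ^ (k - 1) / (2 * k) := by ring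


/-- Every directed graph on `n` vertices with minimum out-degree at least
`n·log(2k)/(k-1)` contains at least `n^ℓ/(2k^{ℓ+1})` directed cycles of length `ℓ`
for some `2 ≤ ℓ ≤ k`.  Cycles of length `ℓ` are counted up to cyclic rotation, so we
count labelled cycles (injective maps `Fin ℓ → V` tracing the cycle) and each cycle
corresponds to exactly `ℓ` of them. -/
theorem stmt_0 (k n : ℕ) (hk : 2 ≤ k) (D : Fin n → Fin n → Prop)
    (hirr : ∀ v, ¬ D v v)
    (hdeg : ∀ v : Fin n, (n : ℝ) * Real.log (2 * k) / ((k : ℝ) - 1) ≤ {u | D v u}.ncard) :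
    ∃ ℓ : ℕ, 2 ≤ ℓ ∧ ℓ ≤ k ∧
      (n : ℝ) ^ ℓ / (2 * (k : ℝ) ^ (ℓ + 1)) * ℓ ≤
        ({f : Fin ℓ → Fin n | Function.Injective f ∧ ∀ i, D (f i) (f (cyc i))}.ncard : ℝ) := by
  classical
  by_cases hn : n = 0
  · refine ⟨2, le_refl 2, hk, ?_⟩
    subst hn
    norm_num
  have hn0 : 0 < n := Nat.pos_of_ne_zero hn
  by_contra hcon
  push_neg at hcon
  have hLcard : ∀ ℓ : ℕ,
      {f : Fin ℓ → Fin n | Function.Injective f ∧ ∀ i, D (f i) (f (cyc i))}.ncard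
      = Fintype.card {f : Fin ℓ → Fin n //
          Function.Injective f ∧ ∀ i, D (f i) (f (cyc i))} := by
    intro ℓ
    rw [Set.ncard_eq_toFinset_card']
    exact Set.toFinset_card _
  have hdegn : ∀ v : Fin n, Fintype.card {u : Fin n // D v u} ≤ n := fun v => by
    calc Fintype.card {u : Fin n // D v u} ≤ Fintype.card (Fin n) := Fintype.card_subtype_le _
      _ = n := Fintype.card_fin n
  have hdeg' : ∀ v : Fin n, (n : ℝ) * Real.log (2 * k) / ((k : ℝ) - 1) ≤
      (Fintype.card {u : Fin n // D v u} : ℝ) := by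
    intro v
    have hthis := hdeg v
    have hb : {u : Fin n | D v u}.ncard = Fintype.card {u : Fin n // D v u} := by
      rw [Set.ncard_eq_toFinset_card']
      exact Set.toFinset_card _
    rwa [hb] at hthis
  -- counting good tuples from below
  have hsplit : Fintype.card {t : Fin k → Fin n // ∀ j, ∃ i, D (t j) (t i)} +
      Fintype.card {t : Fin k → Fin n // ¬ ∀ j, ∃ i, D (t j) (t i)} = n ^ k := by
    have h1 := Fintype.card_subtype_compl (p := fun t : Fin k → Fin n => ∀ j, ∃ i, D (t j) (t i))
    have h2 : Fintype.card {t : Fin k → Fin n // ∀ j, ∃ i, D (t j) (t i)} ≤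
        Fintype.card (Fin k → Fin n) := Fintype.card_subtype_le _
    have h3 : Fintype.card (Fin k → Fin n) = n ^ k := by
      rw [Fintype.card_fun, Fintype.card_fin, Fintype.card_fin]
    rw [h3] at h1 h2
    rw [h1]
    exact Nat.add_sub_cancel' h2
  have hbadsplit : Fintype.card {t : Fin k → Fin n // ¬ ∀ j, ∃ i, D (t j) (t i)} ≤
      ∑ j : Fin k, Fintype.card {t : Fin k → Fin n // ∀ i, ¬ D (t j) (t i)} := by
    have hchoice : ∀ t : {t : Fin k → Fin n // ¬ ∀ j, ∃ i, D (t j) (t i)},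
        ∃ j, ∀ i, ¬ D (t.1 j) (t.1 i) := by
      rintro ⟨t, ht⟩
      push_neg at ht
      exact ht
    choose J hJ using hchoice
    have key : Function.Injective (fun t : {t : Fin k → Fin n // ¬ ∀ j, ∃ i, D (t j) (t i)} =>
        (⟨J t, ⟨t.1, hJ t⟩⟩ :
          Σ j : Fin k, {t : Fin k → Fin n // ∀ i, ¬ D (t j) (t i)})) := by
      intro t t' h
      exact Subtype.ext (congrArg
        (fun x : (Σ j : Fin k, {t : Fin k → Fin n // ∀ i, ¬ D (t j) (t i)}) => x.2.1) h)
    calc Fintype.card {t : Fin k → Fin n // ¬ ∀ j, ∃ i, D (t j) (t i)}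
        ≤ Fintype.card (Σ j : Fin k, {t : Fin k → Fin n // ∀ i, ¬ D (t j) (t i)}) :=
          Fintype.card_le_of_injective _ key
      _ = ∑ j : Fin k, Fintype.card {t : Fin k → Fin n // ∀ i, ¬ D (t j) (t i)} :=
          Fintype.card_sigma
  have hbadj : ∀ j : Fin k,
      (Fintype.card {t : Fin k → Fin n // ∀ i, ¬ D (t j) (t i)} : ℝ) ≤ (n : ℝ) ^ k / (2 * k) := by
    intro j
    have hpow : (n : ℝ) * (n : ℝ) ^ (k - 1) = (n : ℝ) ^ k := by
      rw [← pow_succ']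
      congr 1
      exact Nat.succ_pred_eq_of_pos (lt_of_lt_of_le (by norm_num) hk)
    have h1 := bad_count (D := D) hirr j
    calc (Fintype.card {t : Fin k → Fin n // ∀ i, ¬ D (t j) (t i)} : ℝ)
        ≤ ((∑ v : Fin n, (n - Fintype.card {u : Fin n // D v u}) ^ (k - 1) : ℕ) : ℝ) :=
          Nat.cast_le.mpr h1
      _ = ∑ v : Fin n, ((n - Fintype.card {u : Fin n // D v u} : ℕ) : ℝ) ^ (k - 1) := by
          simp only [Nat.cast_sum, Nat.cast_pow]
      _ ≤ ∑ v : Fin n, (n : ℝ) ^ (k - 1) / (2 * k) :=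
          Finset.sum_le_sum (fun v _ => deg_bound hk hn0 (hdeg' v) (hdegn v))
      _ = (n : ℝ) * ((n : ℝ) ^ (k - 1) / (2 * k)) := by
          rw [Finset.sum_const, Finset.card_univ, Fintype.card_fin, nsmul_eq_mul]
      _ = (n : ℝ) ^ k / (2 * k) := by
          rw [mul_div_assoc', hpow]
  have hGoodLB : (n : ℝ) ^ k / 2 ≤
      (Fintype.card {t : Fin k → Fin n // ∀ j, ∃ i, D (t j) (t i)} : ℝ) := by
    have hk0 : (0 : ℝ) < k := by
      have : (2 : ℝ) ≤ k := by exact_mod_cast hk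
      linarith
    have h2 : (Fintype.card {t : Fin k → Fin n // ¬ ∀ j, ∃ i, D (t j) (t i)} : ℝ) ≤
        (n : ℝ) ^ k / 2 := by
      calc (Fintype.card {t : Fin k → Fin n // ¬ ∀ j, ∃ i, D (t j) (t i)} : ℝ)
          ≤ ((∑ j : Fin k, Fintype.card {t : Fin k → Fin n // ∀ i, ¬ D (t j) (t i)} : ℕ) : ℝ) :=
            Nat.cast_le.mpr hbadsplit
        _ = ∑ j : Fin k, (Fintype.card {t : Fin k → Fin n // ∀ i, ¬ D (t j) (t i)} : ℝ) := by
            simp only [Nat.cast_sum]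
        _ ≤ ∑ _j : Fin k, (n : ℝ) ^ k / (2 * k) := Finset.sum_le_sum (fun j _ => hbadj j)
        _ = (k : ℝ) * ((n : ℝ) ^ k / (2 * k)) := by
            rw [Finset.sum_const, Finset.card_univ, Fintype.card_fin, nsmul_eq_mul]
        _ = (n : ℝ) ^ k / 2 := by
            field_simp
    have h1 : (Fintype.card {t : Fin k → Fin n // ∀ j, ∃ i, D (t j) (t i)} : ℝ) +
        (Fintype.card {t : Fin k → Fin n // ¬ ∀ j, ∃ i, D (t j) (t i)} : ℝ) = (n : ℝ) ^ k := by
      have hcast := congrArg (Nat.cast : ℕ → ℝ) hsplit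
      push_cast at hcast
      exact hcast
    linarith
  -- counting good tuples from above
  have hQex : ∀ t : {t : Fin k → Fin n // ∀ j, ∃ i, D (t j) (t i)},
      ∃ ℓs : ↥(Finset.Icc 2 k),
        ∃ (g : Fin ℓs.1 → Fin n) (p : Fin ℓs.1 → Fin k),
          IsCanon D g ∧ Function.Injective p ∧ ∀ r, t.1 (p r) = g r := by
    rintro ⟨t, ht⟩
    obtain ⟨ℓ, hℓ2, hℓk, g, hinj, hedge, hrange⟩ := good_has_cycle hk hirr t ht
    obtain ⟨g', p, hcanon, hpinj, hp⟩ := exists_canon hℓ2 t hinj hedge hrange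
    exact ⟨⟨ℓ, Finset.mem_Icc.mpr ⟨hℓ2, hℓk⟩⟩, g', p, hcanon, hpinj, hp⟩
  choose Λ hΛ using hQex
  have hGoodUB : Fintype.card {t : Fin k → Fin n // ∀ j, ∃ i, D (t j) (t i)} ≤
      ∑ ℓ ∈ Finset.Icc 2 k, Fintype.card {t : Fin k → Fin n //
        ∃ (g : Fin ℓ → Fin n) (p : Fin ℓ → Fin k),
          IsCanon D g ∧ Function.Injective p ∧ ∀ r, t (p r) = g r} := by
    have key : Function.Injective
        (fun t : {t : Fin k → Fin n // ∀ j, ∃ i, D (t j) (t i)} =>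
          (⟨Λ t, ⟨t.1, hΛ t⟩⟩ : Σ ℓs : ↥(Finset.Icc 2 k),
            {t : Fin k → Fin n // ∃ (g : Fin ℓs.1 → Fin n) (p : Fin ℓs.1 → Fin k),
              IsCanon D g ∧ Function.Injective p ∧ ∀ r, t (p r) = g r})) := by
      intro t t' h
      exact Subtype.ext (congrArg
        (fun x : (Σ ℓs : ↥(Finset.Icc 2 k),
            {t : Fin k → Fin n // ∃ (g : Fin ℓs.1 → Fin n) (p : Fin ℓs.1 → Fin k),
              IsCanon D g ∧ Function.Injective p ∧ ∀ r, t (p r) = g r}) => x.2.1) h)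
    calc Fintype.card {t : Fin k → Fin n // ∀ j, ∃ i, D (t j) (t i)}
        ≤ Fintype.card (Σ ℓs : ↥(Finset.Icc 2 k),
            {t : Fin k → Fin n // ∃ (g : Fin ℓs.1 → Fin n) (p : Fin ℓs.1 → Fin k),
              IsCanon D g ∧ Function.Injective p ∧ ∀ r, t (p r) = g r}) :=
          Fintype.card_le_of_injective _ key
      _ = ∑ ℓs : ↥(Finset.Icc 2 k), Fintype.card
            {t : Fin k → Fin n // ∃ (g : Fin ℓs.1 → Fin n) (p : Fin ℓs.1 → Fin k),
              IsCanon D g ∧ Function.Injective p ∧ ∀ r, t (p r) = g r} :=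
          Fintype.card_sigma
      _ = ∑ ℓ ∈ Finset.Icc 2 k, Fintype.card {t : Fin k → Fin n //
            ∃ (g : Fin ℓ → Fin n) (p : Fin ℓ → Fin k),
              IsCanon D g ∧ Function.Injective p ∧ ∀ r, t (p r) = g r} :=
          Finset.sum_coe_sort _ (fun ℓ => Fintype.card {t : Fin k → Fin n //
            ∃ (g : Fin ℓ → Fin n) (p : Fin ℓ → Fin k),
              IsCanon D g ∧ Function.Injective p ∧ ∀ r, t (p r) = g r})
  -- the per-length bound
  have hterm : ∀ ℓ ∈ Finset.Icc 2 k,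
      (Fintype.card {t : Fin k → Fin n //
        ∃ (g : Fin ℓ → Fin n) (p : Fin ℓ → Fin k),
          IsCanon D g ∧ Function.Injective p ∧ ∀ r, t (p r) = g r} : ℝ) ≤
        (n : ℝ) ^ k / (2 * k) := by
    intro ℓ hmem
    obtain ⟨h2, hk'⟩ := Finset.mem_Icc.mp hmem
    haveI : NeZero ℓ := ⟨Nat.one_le_iff_ne_zero.mp (le_trans (by norm_num) h2)⟩
    have hQc := Q_count (k := k) (n := n) (ℓ := ℓ) (D := D)
    have hCcount := canon_count (ℓ := ℓ) (n := n) (D := D)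
    have hLlt := hcon ℓ h2 hk'
    rw [hLcard ℓ] at hLlt
    have hl0 : (0 : ℝ) < (ℓ : ℝ) := by
      have : (2 : ℝ) ≤ (ℓ : ℝ) := by exact_mod_cast h2
      linarith
    have hC : (Fintype.card {g : Fin ℓ → Fin n // IsCanon D g} : ℝ) ≤
        (n : ℝ) ^ ℓ / (2 * (k : ℝ) ^ (ℓ + 1)) := by
      have hcc : ((ℓ : ℝ)) * (Fintype.card {g : Fin ℓ → Fin n // IsCanon D g} : ℝ) ≤
          (Fintype.card {f : Fin ℓ → Fin n //
            Function.Injective f ∧ ∀ i, D (f i) (f (cyc i))} : ℝ) := by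
        have hcc0 := (Nat.cast_le (α := ℝ)).mpr hCcount
        push_cast at hcc0
        exact hcc0
      have := lt_of_le_of_lt hcc hLlt
      nlinarith [this]
    have hdF : ((Nat.descFactorial k ℓ : ℕ) : ℝ) ≤ (k : ℝ) ^ ℓ := by
      exact_mod_cast Nat.descFactorial_le_pow k ℓ
    have hC0 : (0 : ℝ) ≤ (Fintype.card {g : Fin ℓ → Fin n // IsCanon D g} : ℝ) :=
      Nat.cast_nonneg _
    have hk0 : (0 : ℝ) < (k : ℝ) := by
      have : (2 : ℝ) ≤ (k : ℝ) := by exact_mod_cast hk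
      linarith
    have hnn : (n : ℝ) ^ ℓ * (n : ℝ) ^ (k - ℓ) = (n : ℝ) ^ k := by
      rw [← pow_add]
      congr 1
      exact Nat.add_sub_cancel' hk'
    have hmain : ((n : ℝ) ^ ℓ / (2 * (k : ℝ) ^ (ℓ + 1))) * ((k : ℝ) ^ ℓ * (n : ℝ) ^ (k - ℓ)) =
        (n : ℝ) ^ k / (2 * k) := by
      rw [pow_succ]
      have hkl0 : (0 : ℝ) < (k : ℝ) ^ ℓ := by positivity
      field_simp
      rw [← hnn]
    calc (Fintype.card {t : Fin k → Fin n //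
        ∃ (g : Fin ℓ → Fin n) (p : Fin ℓ → Fin k),
          IsCanon D g ∧ Function.Injective p ∧ ∀ r, t (p r) = g r} : ℝ)
        ≤ (Fintype.card {g : Fin ℓ → Fin n // IsCanon D g} : ℝ) *
            (((Nat.descFactorial k ℓ : ℕ) : ℝ) * (n : ℝ) ^ (k - ℓ)) := by
          have hQc0 := (Nat.cast_le (α := ℝ)).mpr hQc
          push_cast at hQc0
          exact hQc0
      _ ≤ (Fintype.card {g : Fin ℓ → Fin n // IsCanon D g} : ℝ) *
            ((k : ℝ) ^ ℓ * (n : ℝ) ^ (k - ℓ)) := by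
          apply mul_le_mul_of_nonneg_left _ hC0
          apply mul_le_mul_of_nonneg_right hdF (by positivity)
      _ ≤ ((n : ℝ) ^ ℓ / (2 * (k : ℝ) ^ (ℓ + 1))) * ((k : ℝ) ^ ℓ * (n : ℝ) ^ (k - ℓ)) := by
          apply mul_le_mul_of_nonneg_right hC (by positivity)
      _ = (n : ℝ) ^ k / (2 * k) := hmain
  -- put everything together
  have hk0 : (0 : ℝ) < (k : ℝ) := by
    have : (2 : ℝ) ≤ (k : ℝ) := by exact_mod_cast hk
    linarith
  have hnk0 : (0 : ℝ) < (n : ℝ) ^ k := by positivity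
  have hIcc : ((Finset.Icc 2 k).card : ℝ) = (k : ℝ) - 1 := by
    rw [Nat.card_Icc]
    have h21 : k + 1 - 2 = k - 1 := rfl
    rw [h21, Nat.cast_sub (le_trans (by norm_num) hk)]
    norm_num
  have hsumR : ((∑ ℓ ∈ Finset.Icc 2 k, Fintype.card {t : Fin k → Fin n //
      ∃ (g : Fin ℓ → Fin n) (p : Fin ℓ → Fin k),
        IsCanon D g ∧ Function.Injective p ∧ ∀ r, t (p r) = g r} : ℕ) : ℝ) ≤
      ((k : ℝ) - 1) * ((n : ℝ) ^ k / (2 * k)) := by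
    rw [Nat.cast_sum]
    calc (∑ ℓ ∈ Finset.Icc 2 k, (Fintype.card {t : Fin k → Fin n //
        ∃ (g : Fin ℓ → Fin n) (p : Fin ℓ → Fin k),
          IsCanon D g ∧ Function.Injective p ∧ ∀ r, t (p r) = g r} : ℝ))
        ≤ ∑ _ℓ ∈ Finset.Icc 2 k, (n : ℝ) ^ k / (2 * k) := Finset.sum_le_sum hterm
      _ = ((Finset.Icc 2 k).card : ℝ) * ((n : ℝ) ^ k / (2 * k)) := by
          rw [Finset.sum_const, nsmul_eq_mul]
      _ = ((k : ℝ) - 1) * ((n : ℝ) ^ k / (2 * k)) := by rw [hIcc]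
  have hGub : (Fintype.card {t : Fin k → Fin n // ∀ j, ∃ i, D (t j) (t i)} : ℝ) ≤
      ((k : ℝ) - 1) * ((n : ℝ) ^ k / (2 * k)) := by
    refine le_trans ?_ hsumR
    exact Nat.cast_le.mpr hGoodUB
  have hfinal : ((k : ℝ) - 1) * ((n : ℝ) ^ k / (2 * k)) < (n : ℝ) ^ k / 2 := by
    have hpos : 0 < (n : ℝ) ^ k / (2 * k) := by positivity
    have h1 : ((k : ℝ) - 1) * ((n : ℝ) ^ k / (2 * k)) < (k : ℝ) * ((n : ℝ) ^ k / (2 * k)) :=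
      mul_lt_mul_of_pos_right (by linarith) hpos
    have h2 : (k : ℝ) * ((n : ℝ) ^ k / (2 * k)) = (n : ℝ) ^ k / 2 := by
      field_simp
    linarith
  linarith
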